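/- The function g : (π, ∞) → ℝ defined by g(s) = π s (e^s + 1)/((π² + s²)(e^s − 1)) is strictly decreasing: for all s₁, s₂ with π < s₁ < s₂ one has g(s₂) < g(s₁). -/

import Mathlib

open Real

theorem g_strictAnti_beyond_pi :
    ∀ s₁ s₂ : ℝ, π < s₁ → s₁ < s₂ →
      π * s₂ * (Real.exp s₂ + 1) / ((π ^ 2 + s₂ ^ 2) * (Real.exp s₂ - 1)) <
      π * s₁ * (Real.exp s₁ + 1) / ((π ^ 2 + s₁ ^ 2) * (Real.exp s₁ - 1)) := by
  intro s₁ s₂ h1 h2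
  have hπ : (0:ℝ) < π := Real.pi_pos
  have hs₁ : 0 < s₁ := hπ.trans h1
  have hs₂ : 0 < s₂ := hs₁.trans h2
  have he₁ : 1 < Real.exp s₁ := by
    calc (1:ℝ) = Real.exp 0 := (Real.exp_zero).symm
    _ < Real.exp s₁ := Real.exp_lt_exp.mpr hs₁
  have he₂ : 1 < Real.exp s₂ := by
    calc (1:ℝ) = Real.exp 0 := (Real.exp_zero).symm
    _ < Real.exp s₂ := Real.exp_lt_exp.mpr hs₂
  have he12 : Real.exp s₁ < Real.exp s₂ := Real.exp_lt_exp.mpr h2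
  have hd₁ : (0:ℝ) < π ^ 2 + s₁ ^ 2 := by positivity
  have hd₂ : (0:ℝ) < π ^ 2 + s₂ ^ 2 := by positivity
  have key1 : s₂ / (π ^ 2 + s₂ ^ 2) < s₁ / (π ^ 2 + s₁ ^ 2) := by
    rw [div_lt_div_iff₀ hd₂ hd₁]
    have hps : π ^ 2 < s₁ * s₂ := by nlinarith
    nlinarith [mul_pos (sub_pos.mpr hps) (sub_pos.mpr h2)]
  have key2 : (Real.exp s₂ + 1) / (Real.exp s₂ - 1) <
      (Real.exp s₁ + 1) / (Real.exp s₁ - 1) := by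
    rw [div_lt_div_iff₀ (by linarith) (by linarith)]
    nlinarith
  have eq : ∀ s : ℝ, 1 < Real.exp s → 0 < π ^ 2 + s ^ 2 →
      π * s * (Real.exp s + 1) / ((π ^ 2 + s ^ 2) * (Real.exp s - 1)) =
        π * (s / (π ^ 2 + s ^ 2) * ((Real.exp s + 1) / (Real.exp s - 1))) := by
    intro s hs hd
    field_simp
  rw [eq s₁ he₁ hd₁, eq s₂ he₂ hd₂]
  have hA₂ : 0 < s₂ / (π ^ 2 + s₂ ^ 2) := by positivity
  have hB₂ : 0 < (Real.exp s₂ + 1) / (Real.exp s₂ - 1) := by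
    apply div_pos <;> linarith
  nlinarith [mul_lt_mul_of_pos_left key2 hA₂, mul_lt_mul_of_pos_right key1
    (lt_trans hB₂ key2)]
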